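/- arXiv:2502.15249 — 4 statements merged into one kernel-verified Lean document; each statement's English description precedes it below -/
import Mathlib

section
/- Let a, n be real numbers and b an integer, and set F(n,k) = (n + 2k + 2b) · ((a)_{k+b})^4 / ((1 + n − a)_{k+b})^4 for integers k ≥ 0. Define R(n,k) = (a−n−1)^4 (10a² − 8ab − 8ak − 14an − 6a + 2b² + 4bk + 6bn + 2b + 2k² + 6kn + 2k + 5n² + 4n + 1) / (2b + 2k + n), G(n,k) = R(n,k) F(n,k), p₁(n) = (2a−n−1)^5, and p₂(n) = 2(4a−2n−1)(a−n−1)^4. Then, provided all Pochhammer symbols appearing are well defined (no Gamma argument is a nonpositive integer) and 2b + 2k + n ≠ 0 and 2b + 2k + 2 + n ≠ 0, the difference equation p₁(n) F(n+1,k) + p₂(n) F(n,k) = G(n,k+1) − G(n,k) holds for every integer k ≥ 0. -/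
set_option linter.all false


/-- The Pochhammer symbol with integer (possibly negative) index:
`(x)_m = Γ(x + m) / Γ(x)`. -/
noncomputable def pochZ (x : ℝ) (m : ℤ) : ℝ := Real.Gamma (x + m) / Real.Gamma x

/-- `x` is not a nonpositive integer, i.e. `Γ(x)` is well defined (and nonzero). -/
def NotNonposInt (x : ℝ) : Prop := ∀ m : ℤ, m ≤ 0 → x ≠ (m : ℝ)

/-- `F(ν, k) = (ν + 2k + 2b) (a)_{k+b}^4 / (1 + ν - a)_{k+b}^4`. -/
noncomputable def Fwz (a : ℝ) (b : ℤ) (ν : ℝ) (k : ℕ) : ℝ :=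
  (ν + 2 * (k : ℝ) + 2 * (b : ℝ)) * (pochZ a ((k : ℤ) + b)) ^ 4 /
    (pochZ (1 + ν - a) ((k : ℤ) + b)) ^ 4

/-- The rational certificate `R(ν, k)` produced by Zeilberger's algorithm. -/
noncomputable def Rwz (a : ℝ) (b : ℤ) (ν : ℝ) (k : ℕ) : ℝ :=
  (a - ν - 1) ^ 4 *
    (10 * a ^ 2 - 8 * a * (b : ℝ) - 8 * a * (k : ℝ) - 14 * a * ν - 6 * a
      + 2 * (b : ℝ) ^ 2 + 4 * (b : ℝ) * (k : ℝ) + 6 * (b : ℝ) * ν + 2 * (b : ℝ)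
      + 2 * (k : ℝ) ^ 2 + 6 * (k : ℝ) * ν + 2 * (k : ℝ) + 5 * ν ^ 2 + 4 * ν + 1) /
    (2 * (b : ℝ) + 2 * (k : ℝ) + ν)

/-- `G(ν, k) = R(ν, k) F(ν, k)`. -/
noncomputable def Gwz (a : ℝ) (b : ℤ) (ν : ℝ) (k : ℕ) : ℝ :=
  Rwz a b ν k * Fwz a b ν k

lemma gamma_ne_zero_of_not {x : ℝ} (h : NotNonposInt x) : Real.Gamma x ≠ 0 :=
  Real.Gamma_ne_zero fun m => by
    have := h (-(m : ℤ)) (by omega)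
    push_cast at this ⊢
    simpa using this

lemma ne_zero_of_not {x : ℝ} (h : NotNonposInt x) : x ≠ 0 := by
  have := h 0 le_rfl; simpa using this

lemma pochZ_ne_zero {x : ℝ} {m : ℤ} (h0 : NotNonposInt x) (hm : NotNonposInt (x + m)) :
    pochZ x m ≠ 0 :=
  div_ne_zero (gamma_ne_zero_of_not hm) (gamma_ne_zero_of_not h0)

lemma pochZ_succ {x : ℝ} {m : ℤ} (hm : x + (m : ℝ) ≠ 0) :
    pochZ x (m + 1) = (x + m) * pochZ x m := by
  unfold pochZ
  push_cast
  rw [show x + ((m : ℝ) + 1) = (x + m) + 1 by ring, Real.Gamma_add_one hm]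
  ring

lemma pochZ_base_succ {x : ℝ} {m : ℤ} (hx : x ≠ 0) (hm : x + (m : ℝ) ≠ 0) :
    pochZ (x + 1) m = pochZ x m * (x + m) / x := by
  unfold pochZ
  rw [show x + 1 + (m : ℝ) = (x + m) + 1 by ring, Real.Gamma_add_one hm,
    Real.Gamma_add_one hx]
  field_simp

lemma key_poly (a n s : ℝ) :
    (2 * a - n - 1) ^ 5 * (n + 1 + 2 * s) * (1 + n - a) ^ 4
        + 2 * (4 * a - 2 * n - 1) * (a - n - 1) ^ 4 * (n + 2 * s) * (1 + n - a + s) ^ 4 =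
      (a - n - 1) ^ 4 *
          (10 * a ^ 2 - 8 * a * (s + 1) - 14 * a * n - 6 * a + 2 * (s + 1) ^ 2
            + 6 * (s + 1) * n + 2 * (s + 1) + 5 * n ^ 2 + 4 * n + 1) * (a + s) ^ 4
        - (a - n - 1) ^ 4 *
            (10 * a ^ 2 - 8 * a * s - 14 * a * n - 6 * a + 2 * s ^ 2 + 6 * s * n + 2 * s
              + 5 * n ^ 2 + 4 * n + 1) * (1 + n - a + s) ^ 4 := by
  ring

lemma key (a n s p q : ℝ) (hp : p ≠ 0) (hq : q ≠ 0) (hB : 1 + n - a ≠ 0)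
    (hBs : 1 + n - a + s ≠ 0) (h1 : 2 * s + n ≠ 0) (h2 : 2 * s + 2 + n ≠ 0) :
    (2 * a - n - 1) ^ 5 * ((n + 1 + 2 * s) * p ^ 4 / (q * (1 + n - a + s) / (1 + n - a)) ^ 4)
      + 2 * (4 * a - 2 * n - 1) * (a - n - 1) ^ 4 * ((n + 2 * s) * p ^ 4 / q ^ 4) =
    (a - n - 1) ^ 4 *
        (10 * a ^ 2 - 8 * a * (s + 1) - 14 * a * n - 6 * a + 2 * (s + 1) ^ 2
          + 6 * (s + 1) * n + 2 * (s + 1) + 5 * n ^ 2 + 4 * n + 1) / (2 * (s + 1) + n) *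
        ((n + 2 * (s + 1)) * (p * (a + s)) ^ 4 / (q * (1 + n - a + s)) ^ 4)
      - (a - n - 1) ^ 4 *
          (10 * a ^ 2 - 8 * a * s - 14 * a * n - 6 * a + 2 * s ^ 2 + 6 * s * n + 2 * s
            + 5 * n ^ 2 + 4 * n + 1) / (2 * s + n) *
          ((n + 2 * s) * p ^ 4 / q ^ 4) := by
  have hq4 : q ^ 4 ≠ 0 := pow_ne_zero _ hq
  have hBs4 : (1 + n - a + s) ^ 4 ≠ 0 := pow_ne_zero _ hBs
  have hB4 : (1 + n - a) ^ 4 ≠ 0 := pow_ne_zero _ hB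
  have hD : q ^ 4 * (1 + n - a + s) ^ 4 ≠ 0 := mul_ne_zero hq4 hBs4
  have h2' : 2 * (s + 1) + n ≠ 0 := by
    intro h; apply h2; linarith
  have e1 : (2 * a - n - 1) ^ 5 *
      ((n + 1 + 2 * s) * p ^ 4 / (q * (1 + n - a + s) / (1 + n - a)) ^ 4) =
      ((2 * a - n - 1) ^ 5 * (n + 1 + 2 * s) * (1 + n - a) ^ 4 * p ^ 4) /
        (q ^ 4 * (1 + n - a + s) ^ 4) := by
    field_simp
  have e2 : 2 * (4 * a - 2 * n - 1) * (a - n - 1) ^ 4 * ((n + 2 * s) * p ^ 4 / q ^ 4) =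
      (2 * (4 * a - 2 * n - 1) * (a - n - 1) ^ 4 * (n + 2 * s) * (1 + n - a + s) ^ 4 * p ^ 4) /
        (q ^ 4 * (1 + n - a + s) ^ 4) := by
    field_simp
  have e3 : (a - n - 1) ^ 4 *
        (10 * a ^ 2 - 8 * a * (s + 1) - 14 * a * n - 6 * a + 2 * (s + 1) ^ 2
          + 6 * (s + 1) * n + 2 * (s + 1) + 5 * n ^ 2 + 4 * n + 1) / (2 * (s + 1) + n) *
        ((n + 2 * (s + 1)) * (p * (a + s)) ^ 4 / (q * (1 + n - a + s)) ^ 4) =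
      ((a - n - 1) ^ 4 *
        (10 * a ^ 2 - 8 * a * (s + 1) - 14 * a * n - 6 * a + 2 * (s + 1) ^ 2
          + 6 * (s + 1) * n + 2 * (s + 1) + 5 * n ^ 2 + 4 * n + 1) * (a + s) ^ 4 * p ^ 4) /
        (q ^ 4 * (1 + n - a + s) ^ 4) := by
    field_simp
    rw [div_eq_iff (by intro h; apply h2'; linarith)]
    ring
  have e4 : (a - n - 1) ^ 4 *
        (10 * a ^ 2 - 8 * a * s - 14 * a * n - 6 * a + 2 * s ^ 2 + 6 * s * n + 2 * s
          + 5 * n ^ 2 + 4 * n + 1) / (2 * s + n) *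
        ((n + 2 * s) * p ^ 4 / q ^ 4) =
      ((a - n - 1) ^ 4 *
        (10 * a ^ 2 - 8 * a * s - 14 * a * n - 6 * a + 2 * s ^ 2 + 6 * s * n + 2 * s
          + 5 * n ^ 2 + 4 * n + 1) * (1 + n - a + s) ^ 4 * p ^ 4) /
        (q ^ 4 * (1 + n - a + s) ^ 4) := by
    field_simp
    rw [div_eq_iff (by intro h; apply h1; linarith)]
    ring
  rw [e1, e2, e3, e4, ← add_div, ← sub_div]
  congr 1
  linear_combination p ^ 4 * key_poly a n s

/-- The difference equation `p₁(n) F(n+1, k) + p₂(n) F(n, k) = G(n, k+1) - G(n, k)`. -/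
theorem wz_difference_equation (a n : ℝ) (b : ℤ)
    (hbase₁ : NotNonposInt a) (hbase₂ : NotNonposInt (1 + n - a))
    (hbase₃ : NotNonposInt (1 + (n + 1) - a))
    (hwd : ∀ k : ℕ, NotNonposInt (a + ((k : ℤ) + b : ℤ)) ∧
      NotNonposInt (1 + n - a + ((k : ℤ) + b : ℤ)) ∧
      NotNonposInt (1 + (n + 1) - a + ((k : ℤ) + b : ℤ)))
    (hden : ∀ k : ℕ, 2 * (b : ℝ) + 2 * (k : ℝ) + n ≠ 0 ∧
      2 * (b : ℝ) + 2 * (k : ℝ) + 2 + n ≠ 0) :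
    ∀ k : ℕ,
      (2 * a - n - 1) ^ 5 * Fwz a b (n + 1) k
          + 2 * (4 * a - 2 * n - 1) * (a - n - 1) ^ 4 * Fwz a b n k =
        Gwz a b n (k + 1) - Gwz a b n k := by
  intro k
  have hB : 1 + n - a ≠ 0 := ne_zero_of_not hbase₂
  have hA' : a + (((k : ℤ) + b : ℤ) : ℝ) ≠ 0 := ne_zero_of_not (hwd k).1
  have hB' : 1 + n - a + (((k : ℤ) + b : ℤ) : ℝ) ≠ 0 := ne_zero_of_not (hwd k).2.1
  have hAs : a + ((k : ℝ) + (b : ℝ)) ≠ 0 := by push_cast at hA'; intro h; apply hA'; linarith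
  have hBs : 1 + n - a + ((k : ℝ) + (b : ℝ)) ≠ 0 := by
    push_cast at hB'; intro h; apply hB'; linarith
  have hp : pochZ a ((k : ℤ) + b) ≠ 0 := pochZ_ne_zero hbase₁ (hwd k).1
  have hq : pochZ (1 + n - a) ((k : ℤ) + b) ≠ 0 := pochZ_ne_zero hbase₂ (hwd k).2.1
  have h1 : 2 * ((k : ℝ) + (b : ℝ)) + n ≠ 0 := by
    have := (hden k).1; intro h; apply this; linarith
  have h2 : 2 * ((k : ℝ) + (b : ℝ)) + 2 + n ≠ 0 := by
    have := (hden k).2; intro h; apply this; linarith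
  have ep : pochZ a (((k + 1 : ℕ) : ℤ) + b)
      = (a + ((k : ℝ) + (b : ℝ))) * pochZ a ((k : ℤ) + b) := by
    rw [show ((k + 1 : ℕ) : ℤ) + b = ((k : ℤ) + b) + 1 by push_cast; ring,
      pochZ_succ hA']
    push_cast
    ring
  have eq' : pochZ (1 + n - a) (((k + 1 : ℕ) : ℤ) + b)
      = (1 + n - a + ((k : ℝ) + (b : ℝ))) * pochZ (1 + n - a) ((k : ℤ) + b) := by
    rw [show ((k + 1 : ℕ) : ℤ) + b = ((k : ℤ) + b) + 1 by push_cast; ring,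
      pochZ_succ hB']
    push_cast
    ring
  have eb : pochZ (1 + (n + 1) - a) ((k : ℤ) + b)
      = pochZ (1 + n - a) ((k : ℤ) + b) * (1 + n - a + ((k : ℝ) + (b : ℝ))) / (1 + n - a) := by
    rw [show (1 + (n + 1) - a) = (1 + n - a) + 1 by ring, pochZ_base_succ hB hB']
    push_cast
    ring
  have K := key a n ((k : ℝ) + (b : ℝ)) (pochZ a ((k : ℤ) + b))
    (pochZ (1 + n - a) ((k : ℤ) + b)) hp hq hB hBs h1 h2
  simp only [Fwz, Gwz, Rwz, ep, eq', eb]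
  push_cast
  linear_combination K
end

section
/- For every natural number n, the partial sum Σ_{k=0}^{n} ((1/2)_k)^4 / ((2)_k)^4 · (4k + 3) equals 16 − ((3/2)_n)^4 / ((2)_n)^4 · (8n² + 20n + 13). -/
/-- The Pochhammer symbol `(x)_k = x (x+1) ⋯ (x+k-1) = Γ(x+k)/Γ(x)`. -/
noncomputable def poch (x : ℝ) (k : ℕ) : ℝ := ∏ i ∈ Finset.range k, (x + i)

lemma poch_pos {x : ℝ} (hx : 0 < x) (k : ℕ) : 0 < poch x k := by
  apply Finset.prod_pos
  intro i _
  positivity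

lemma poch_succ (x : ℝ) (k : ℕ) : poch x (k + 1) = poch x k * (x + k) := by
  simp [poch, Finset.prod_range_succ]

lemma poch_succ' (x : ℝ) (k : ℕ) : poch x (k + 1) = x * poch (x + 1) k := by
  simp only [poch, Finset.prod_range_succ']
  rw [mul_comm]
  congr 1
  · norm_num
  · apply Finset.prod_congr rfl
    intro i _
    push_cast
    ring

theorem partial_sum_identity (n : ℕ) :
    ∑ k ∈ Finset.range (n + 1),
        (poch (1/2) k) ^ 4 / (poch 2 k) ^ 4 * (4 * (k : ℝ) + 3) =
      16 - (poch (3/2) n) ^ 4 / (poch 2 n) ^ 4 *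
        (8 * (n : ℝ) ^ 2 + 20 * n + 13) := by
  induction n with
  | zero => simp [poch]; norm_num
  | succ n ih =>
    rw [Finset.sum_range_succ, ih]
    have h1 : poch (1/2) (n + 1) = 1/2 * poch (3/2) n := by
      rw [poch_succ']; norm_num
    have h2 : poch 2 (n + 1) = poch 2 n * (2 + n) := poch_succ 2 n
    have h3 : poch (3/2) (n + 1) = poch (3/2) n * (3/2 + n) := poch_succ (3/2) n
    have hA : (0:ℝ) < poch (3/2) n := poch_pos (by norm_num) n
    have hB : (0:ℝ) < poch 2 n := poch_pos (by norm_num) n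
    have hn : (0:ℝ) < 2 + (n:ℝ) := by positivity
    rw [h1, h2, h3]
    push_cast
    field_simp
    ring
end

section
/- The series Σ_{k=0}^∞ (−1/4)^k · ((1/2)_k)^5 / ((1)_k · ((4)_k)^4) · (4k² + 16k + 17) converges and equals 2^19 / (5^5 · π²). -/
namespace SeriesB4

lemma poch_zero (x : ℝ) : poch x 0 = 1 := by simp [poch]

lemma poch_succ (x : ℝ) (k : ℕ) : poch x (k+1) = poch x k * (x + k) :=
  Finset.prod_range_succ _ _

lemma poch_pos {x : ℝ} (hx : 0 < x) (k : ℕ) : 0 < poch x k :=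
  Finset.prod_pos (fun i _ => by positivity)

lemma poch_nonneg {x : ℝ} (hx : 0 ≤ x) (k : ℕ) : 0 ≤ poch x k :=
  Finset.prod_nonneg (fun i _ => by positivity)

lemma poch_le_poch {x y : ℝ} (hx : 0 ≤ x) (hxy : x ≤ y) (k : ℕ) : poch x k ≤ poch y k :=
  Finset.prod_le_prod (fun i _ => by positivity) (fun i _ => by
    have : (0:ℝ) ≤ (i:ℕ) := Nat.cast_nonneg i
    linarith)

lemma poch_add (x : ℝ) (m n : ℕ) : poch x (m+n) = poch x m * poch (x+m) n := by
  unfold poch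
  rw [Finset.prod_range_add]
  congr 1
  refine Finset.prod_congr rfl (fun i _ => ?_)
  push_cast
  ring

lemma poch_ne_zero {x : ℝ} (hx : 0 < x) (k : ℕ) : poch x k ≠ 0 := (poch_pos hx k).ne'

lemma poch_succ' (x : ℝ) (k : ℕ) : poch x (k+1) = x * poch (x+1) k := by
  have := poch_add x 1 k
  simp only [poch, Finset.prod_range_one] at this ⊢
  rw [show 1 + k = k + 1 from by omega] at this
  simpa using this

/-- `(1/2)_n ^ 2 * (n+1) ≤ (1)_n ^ 2`. -/
lemma poch_half_sq (n : ℕ) : poch (1/2) n ^ 2 * (n + 1) ≤ poch 1 n ^ 2 := by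
  induction n with
  | zero => simp [poch_zero]
  | succ n ih =>
    rw [poch_succ, poch_succ]
    have hA : (0:ℝ) ≤ poch (1/2) n ^ 2 := sq_nonneg _
    have hn : (0:ℝ) ≤ (n:ℕ) := Nat.cast_nonneg n
    push_cast
    nlinarith [sq_nonneg ((n:ℝ)+1), mul_le_mul_of_nonneg_right ih (sq_nonneg ((n:ℝ)+1))]

noncomputable def Phi (n k : ℕ) : ℝ :=
  (-1/4 : ℝ) ^ k * poch (1/2) k ^ 5 * poch (1/2) n ^ 4 / (poch 1 k * poch 1 (n+k) ^ 4)

noncomputable def FF (n k : ℕ) : ℝ :=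
  Phi n k * (8*(n:ℝ)^2 + 4*n + 24*n*k + 20*(k:ℝ)^2 + 8*k + 1)

noncomputable def HH (n k : ℕ) : ℝ :=
  Phi n k * (8*(k:ℝ)*(2*k + 4*n + 1))

/-- The WZ-style recurrence. -/
lemma wz (n k : ℕ) : FF (n+1) k - FF n k = HH n (k+1) - HH n k := by
  have hc : poch 1 k ≠ 0 := poch_ne_zero one_pos k
  have hd : poch 1 (n+k) ≠ 0 := poch_ne_zero one_pos _
  have hck : (1:ℝ) + k ≠ 0 := by positivity
  have hdk : (1:ℝ) + ((n:ℝ) + k) ≠ 0 := by positivity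
  unfold FF HH Phi
  have e1 : poch (1/2 : ℝ) (n+1) = poch (1/2) n * (1/2 + n) := poch_succ _ _
  have e2 : poch (1/2 : ℝ) (k+1) = poch (1/2) k * (1/2 + k) := poch_succ _ _
  have e3 : poch (1:ℝ) (k+1) = poch 1 k * (1 + k) := poch_succ _ _
  have en1 : n+1+k = (n+k)+1 := by omega
  have en2 : n+(k+1) = (n+k)+1 := by omega
  have e4 : poch (1:ℝ) ((n+k)+1) = poch 1 (n+k) * (1 + ((n:ℝ)+k)) := by
    rw [poch_succ]; push_cast; ring
  rw [en1, en2, e1, e2, e3, e4, pow_succ]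
  push_cast
  field_simp
  ring

lemma abs_Phi (n k : ℕ) :
    |Phi n k| = (1/4:ℝ)^k * poch (1/2) k ^ 5 * poch (1/2) n ^ 4 / (poch 1 k * poch 1 (n+k) ^ 4) := by
  have h1 : (0:ℝ) < poch 1 k := poch_pos one_pos k
  have h2 : (0:ℝ) < poch 1 (n+k) := poch_pos one_pos _
  have h3 : (0:ℝ) ≤ poch (1/2) k := poch_nonneg (by norm_num) k
  have h4 : (0:ℝ) ≤ poch (1/2) n := poch_nonneg (by norm_num) n
  have hden : (0:ℝ) < poch 1 k * poch 1 (n+k) ^ 4 := by positivity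
  unfold Phi
  rw [abs_div, abs_mul, abs_mul, abs_pow, abs_pow, abs_pow, abs_of_nonneg h3,
    abs_of_nonneg h4, abs_of_pos hden, show |(-1/4 : ℝ)| = 1/4 by norm_num]

lemma aux_sq (k : ℕ) : ((k:ℝ)+1)^2 + k + 3 ≤ 4 * 2^k := by
  induction k with
  | zero => norm_num
  | succ k ih =>
    have hn : (0:ℝ) ≤ (k:ℕ) := Nat.cast_nonneg k
    push_cast
    push_cast at ih
    rw [pow_succ 2 k]
    nlinarith [ih]

lemma sq_quarter (k : ℕ) : ((k:ℝ)+1)^2 * (1/4:ℝ)^k ≤ 4 * (1/2)^k := by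
  have h1 : ((k:ℝ)+1)^2 ≤ 4 * 2^k := by
    have := aux_sq k
    have hn : (0:ℝ) ≤ (k:ℕ) := Nat.cast_nonneg k
    linarith
  have h2 : (0:ℝ) ≤ (1/4:ℝ)^k := by positivity
  calc ((k:ℝ)+1)^2 * (1/4:ℝ)^k ≤ (4 * 2^k) * (1/4)^k := by
        exact mul_le_mul_of_nonneg_right h1 h2
    _ = 4 * (1/2)^k := by
        rw [mul_assoc, ← mul_pow]
        norm_num

lemma P_nonneg (n k : ℕ) : (0:ℝ) ≤ 8*(n:ℝ)^2 + 4*n + 24*n*k + 20*(k:ℝ)^2 + 8*k + 1 := by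
  have hn : (0:ℝ) ≤ (n:ℕ) := Nat.cast_nonneg n
  have hk : (0:ℝ) ≤ (k:ℕ) := Nat.cast_nonneg k
  positivity

lemma P_bound (n k : ℕ) :
    8*(n:ℝ)^2 + 4*n + 24*n*k + 20*(k:ℝ)^2 + 8*k + 1 ≤ 65*((n:ℝ)+1)^2*((k:ℝ)+1)^2 := by
  have hn : (0:ℝ) ≤ (n:ℕ) := Nat.cast_nonneg n
  have hk : (0:ℝ) ≤ (k:ℕ) := Nat.cast_nonneg k
  nlinarith [mul_nonneg hn hk, mul_nonneg (mul_nonneg hn hn) hk, mul_nonneg (mul_nonneg hn hk) hk,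
    mul_nonneg (mul_nonneg (mul_nonneg hn hn) hk) hk, sq_nonneg ((n:ℝ)*k)]

lemma Phi_le (n k : ℕ) : |Phi n k| ≤ (1/4:ℝ)^k := by
  rw [abs_Phi]
  have h1 : (0:ℝ) < poch 1 k := poch_pos one_pos k
  have h2 : (0:ℝ) < poch 1 (n+k) := poch_pos one_pos _
  have h3 : (0:ℝ) ≤ poch (1/2) k := poch_nonneg (by norm_num) k
  have h4 : (0:ℝ) ≤ poch (1/2) n := poch_nonneg (by norm_num) n
  rw [mul_assoc, mul_div_assoc]
  have hnum : poch (1/2) k ^ 5 * poch (1/2) n ^ 4 ≤ poch 1 k * poch 1 (n+k) ^ 4 := by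
    have hb : poch (1/2) k ≤ poch 1 k := poch_le_poch (by norm_num) (by norm_num) k
    have hab : poch (1/2) n * poch (1/2) k ≤ poch 1 (n+k) := by
      rw [poch_add 1 n k]
      have h5 : poch (1/2) n ≤ poch 1 n := poch_le_poch (by norm_num) (by norm_num) n
      have h6 : poch (1/2) k ≤ poch (1+(n:ℝ)) k := poch_le_poch (by norm_num) (by
        have : (0:ℝ) ≤ (n:ℕ) := Nat.cast_nonneg n
        linarith) k
      exact mul_le_mul h5 h6 h3 (poch_nonneg (by norm_num) n)
    calc poch (1/2) k ^ 5 * poch (1/2) n ^ 4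
        = poch (1/2) k * (poch (1/2) n * poch (1/2) k)^4 := by ring
      _ ≤ poch 1 k * poch 1 (n+k) ^ 4 := by
          refine mul_le_mul hb (pow_le_pow_left₀ (by positivity) hab 4) (by positivity)
            (by positivity)
  calc (1/4:ℝ)^k * (poch (1/2) k ^ 5 * poch (1/2) n ^ 4 / (poch 1 k * poch 1 (n+k) ^ 4))
      ≤ (1/4:ℝ)^k * 1 := by
        refine mul_le_mul_of_nonneg_left ?_ (by positivity)
        rw [div_le_one (by positivity)]
        exact hnum
    _ = (1/4:ℝ)^k := by ring

lemma FF_le (n k : ℕ) : |FF n k| ≤ (260*((n:ℝ)+1)^2) * (1/2)^k := by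
  unfold FF
  rw [abs_mul]
  have h1 := Phi_le n k
  have h2 := P_bound n k
  have h0 := P_nonneg n k
  rw [abs_of_nonneg h0]
  calc |Phi n k| * (8*(n:ℝ)^2 + 4*n + 24*n*k + 20*(k:ℝ)^2 + 8*k + 1)
      ≤ (1/4:ℝ)^k * (65*((n:ℝ)+1)^2*((k:ℝ)+1)^2) := by
        refine mul_le_mul h1 h2 h0 (by positivity)
    _ = 65*((n:ℝ)+1)^2 * (((k:ℝ)+1)^2 * (1/4:ℝ)^k) := by ring
    _ ≤ 65*((n:ℝ)+1)^2 * (4 * (1/2)^k) := by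
        refine mul_le_mul_of_nonneg_left (sq_quarter k) (by positivity)
    _ = (260*((n:ℝ)+1)^2) * (1/2)^k := by ring

lemma HH_le (n k : ℕ) : |HH n k| ≤ (128*((n:ℝ)+1)) * (1/2)^k := by
  unfold HH
  rw [abs_mul]
  have hn : (0:ℝ) ≤ (n:ℕ) := Nat.cast_nonneg n
  have hk : (0:ℝ) ≤ (k:ℕ) := Nat.cast_nonneg k
  have h0 : (0:ℝ) ≤ 8*(k:ℝ)*(2*k + 4*n + 1) := by positivity
  rw [abs_of_nonneg h0]
  have h2 : 8*(k:ℝ)*(2*k + 4*n + 1) ≤ 32*((n:ℝ)+1)*((k:ℝ)+1)^2 := by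
    nlinarith [mul_nonneg hn hk]
  calc |Phi n k| * (8*(k:ℝ)*(2*k + 4*n + 1))
      ≤ (1/4:ℝ)^k * (32*((n:ℝ)+1)*((k:ℝ)+1)^2) := mul_le_mul (Phi_le n k) h2 h0 (by positivity)
    _ = 32*((n:ℝ)+1) * (((k:ℝ)+1)^2 * (1/4:ℝ)^k) := by ring
    _ ≤ 32*((n:ℝ)+1) * (4 * (1/2)^k) := mul_le_mul_of_nonneg_left (sq_quarter k) (by positivity)
    _ = (128*((n:ℝ)+1)) * (1/2)^k := by ring

lemma FF_summable (n : ℕ) : Summable (FF n) := by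
  refine Summable.of_norm_bounded (g := fun k => (260*((n:ℝ)+1)^2) * (1/2)^k) ?_ (fun k => FF_le n k)
  exact (summable_geometric_of_lt_one (by norm_num) (by norm_num)).mul_left _

/-- Refined bound for the tail terms `k ≥ 1`, decaying in `n`. -/
lemma FF_tail_le (n k : ℕ) : |FF n (k+1)| ≤ (260/((n:ℝ)+1)^4) * (1/2)^k := by
  have h1 : (0:ℝ) < poch 1 (k+1) := poch_pos one_pos _
  have h2 : (0:ℝ) < poch 1 (n+(k+1)) := poch_pos one_pos _
  have h3 : (0:ℝ) ≤ poch (1/2) (k+1) := poch_nonneg (by norm_num) _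
  have h4 : (0:ℝ) ≤ poch (1/2) n := poch_nonneg (by norm_num) n
  have hn : (0:ℝ) ≤ (n:ℕ) := Nat.cast_nonneg n
  have he : (0:ℝ) < poch 1 n := poch_pos one_pos n
  -- key denominator estimate
  have hd : poch 1 n * (((n:ℝ)+1) * poch 1 (k+1)) ≤ poch 1 (n+(k+1)) := by
    rw [poch_add 1 n (k+1)]
    refine mul_le_mul_of_nonneg_left ?_ he.le
    have e5 : poch (1+(n:ℝ)) (k+1) = (1+(n:ℝ)) * poch (1+(n:ℝ)+1) k := poch_succ' _ _
    have e6 : poch (1:ℝ) (k+1) = poch 2 k := by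
      rw [poch_succ' 1 k]; norm_num
    rw [e5, e6]
    have h7 : poch (2:ℝ) k ≤ poch (1+(n:ℝ)+1) k :=
      poch_le_poch (by norm_num) (by linarith) k
    have : ((n:ℝ)+1) = (1+(n:ℝ)) := by ring
    rw [this]
    exact mul_le_mul_of_nonneg_left h7 (by linarith)
  -- numerator estimates
  have hb : poch (1/2) (k+1) ≤ poch 1 (k+1) := poch_le_poch (by norm_num) (by norm_num) _
  have hhalf := poch_half_sq n
  -- |Phi n (k+1)| ≤ (1/4)^(k+1) / (n+1)^6
  have hkey : poch (1/2) (k+1)^5 * poch (1/2) n^4 * ((n:ℝ)+1)^6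
      ≤ poch 1 (k+1) * poch 1 (n+(k+1))^4 := by
    have hstep : poch 1 (k+1) * (poch 1 n * (((n:ℝ)+1) * poch 1 (k+1)))^4
        ≤ poch 1 (k+1) * poch 1 (n+(k+1))^4 :=
      mul_le_mul_of_nonneg_left (pow_le_pow_left₀ (by positivity) hd 4) h1.le
    refine le_trans ?_ hstep
    have hb5 : poch (1/2) (k+1)^5 ≤ poch 1 (k+1)^5 := pow_le_pow_left₀ h3 hb 5
    have hq : (poch (1/2) n ^2 * ((n:ℝ)+1))^2 ≤ (poch 1 n ^2)^2 := by
      refine pow_le_pow_left₀ (by positivity) ?_ 2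
      exact_mod_cast hhalf
    calc poch (1/2) (k+1)^5 * poch (1/2) n^4 * ((n:ℝ)+1)^6
        = poch (1/2) (k+1)^5 * ((poch (1/2) n^2 * ((n:ℝ)+1))^2 * ((n:ℝ)+1)^4) := by ring
      _ ≤ poch 1 (k+1)^5 * ((poch 1 n^2)^2 * ((n:ℝ)+1)^4) := by
          refine mul_le_mul hb5 (mul_le_mul_of_nonneg_right hq (by positivity)) (by positivity)
            (by positivity)
      _ = poch 1 (k+1) * (poch 1 n * (((n:ℝ)+1) * poch 1 (k+1)))^4 := by ring
  have hPhi : |Phi n (k+1)| ≤ (1/4:ℝ)^(k+1) / ((n:ℝ)+1)^6 := by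
    rw [abs_Phi, div_le_div_iff₀ (by positivity) (by positivity)]
    calc (1/4:ℝ)^(k+1) * poch (1/2) (k+1) ^ 5 * poch (1/2) n ^ 4 * ((n:ℝ)+1)^6
        = (1/4:ℝ)^(k+1) * (poch (1/2) (k+1)^5 * poch (1/2) n^4 * ((n:ℝ)+1)^6) := by ring
      _ ≤ (1/4:ℝ)^(k+1) * (poch 1 (k+1) * poch 1 (n+(k+1))^4) :=
          mul_le_mul_of_nonneg_left hkey (by positivity)
  -- combine with polynomial bound
  unfold FF
  rw [abs_mul, abs_of_nonneg (P_nonneg n (k+1))]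
  have hP := P_bound n (k+1)
  calc |Phi n (k+1)| * (8*(n:ℝ)^2 + 4*n + 24*n*(k+1:ℕ) + 20*((k+1:ℕ):ℝ)^2 + 8*(k+1:ℕ) + 1)
      ≤ ((1/4:ℝ)^(k+1) / ((n:ℝ)+1)^6) * (65*((n:ℝ)+1)^2*(((k+1:ℕ):ℝ)+1)^2) :=
        mul_le_mul hPhi hP (P_nonneg n (k+1)) (by positivity)
    _ = (65/((n:ℝ)+1)^4) * ((((k+1:ℕ):ℝ)+1)^2 * (1/4:ℝ)^(k+1)) := by
        push_cast
        field_simp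
    _ ≤ (65/((n:ℝ)+1)^4) * (4 * (1/2:ℝ)^(k+1)) := by
        refine mul_le_mul_of_nonneg_left ?_ (by positivity)
        exact_mod_cast sq_quarter (k+1)
    _ = (130/((n:ℝ)+1)^4) * (1/2)^k := by
        rw [pow_succ]
        ring
    _ ≤ (260/((n:ℝ)+1)^4) * (1/2)^k := by
        have : (0:ℝ) ≤ (1/2:ℝ)^k := by positivity
        have h8 : (0:ℝ) < ((n:ℝ)+1)^4 := by positivity
        refine mul_le_mul_of_nonneg_right ?_ this
        gcongr
        norm_num

lemma HH_zero (n : ℕ) : HH n 0 = 0 := by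
  unfold HH
  norm_num

lemma partial_sum (n K : ℕ) :
    ∑ k ∈ Finset.range K, FF (n+1) k = (∑ k ∈ Finset.range K, FF n k) + HH n K := by
  induction K with
  | zero => simp [HH_zero]
  | succ K ih =>
    rw [Finset.sum_range_succ, Finset.sum_range_succ, ih]
    have := wz n K
    linarith

noncomputable def S (n : ℕ) : ℝ := ∑' k, FF n k

lemma geom_tendsto : Filter.Tendsto (fun k : ℕ => ((1:ℝ)/2)^k) Filter.atTop (nhds 0) :=
  tendsto_pow_atTop_nhds_zero_of_lt_one (by norm_num) (by norm_num)

lemma HH_tendsto (n : ℕ) : Filter.Tendsto (fun K => HH n K) Filter.atTop (nhds 0) := by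
  refine squeeze_zero_norm (fun k => HH_le n k) ?_
  simpa using geom_tendsto.const_mul (128*((n:ℝ)+1))

lemma S_succ (n : ℕ) : S (n+1) = S n := by
  have h1 := (FF_summable (n+1)).hasSum.tendsto_sum_nat
  have h2 := (FF_summable n).hasSum.tendsto_sum_nat
  have h4 : Filter.Tendsto (fun K => ∑ k ∈ Finset.range K, FF (n+1) k)
      Filter.atTop (nhds (S n + 0)) :=
    (h2.add (HH_tendsto n)).congr (fun K => (partial_sum n K).symm)
  have := tendsto_nhds_unique h1 h4
  simpa [S] using this

lemma S_const (n : ℕ) : S n = S 0 := by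
  induction n with
  | zero => rfl
  | succ n ih => rw [S_succ, ih]

-- the Wallis product
noncomputable def W (n : ℕ) : ℝ :=
  ∏ i ∈ Finset.range n, ((2 : ℝ) * i + 2) / (2 * i + 1) * ((2 * i + 2) / (2 * i + 3))

lemma W_pos (n : ℕ) : 0 < W n :=
  Finset.prod_pos (fun i _ => by positivity)

lemma W_mul (n : ℕ) : W n * (poch (1/2) n ^2 * (2*(n:ℝ)+1) / poch 1 n ^2) = 1 := by
  induction n with
  | zero => simp [W, poch_zero]
  | succ n ih =>
    have he : poch (1:ℝ) n ≠ 0 := poch_ne_zero one_pos n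
    have hn : (0:ℝ) ≤ (n:ℕ) := Nat.cast_nonneg n
    have h1 : (2*(n:ℝ)+1) ≠ 0 := by positivity
    have h2 : (2*(n:ℝ)+3) ≠ 0 := by positivity
    have h3 : (2*(n:ℝ)+2) ≠ 0 := by positivity
    have hq : poch (1/2) (n+1)^2 * (2*((n:ℝ)+1)+1) / poch 1 (n+1)^2
        = (poch (1/2) n^2 * (2*(n:ℝ)+1) / poch 1 n^2)
          * ((2*(n:ℝ)+1)*(2*(n:ℝ)+3)/((2*(n:ℝ)+2)^2)) := by
      rw [poch_succ, poch_succ]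
      field_simp
      ring
    have hW : W (n+1) = W n * (((2*(n:ℝ)+2)/(2*(n:ℝ)+1)) * ((2*(n:ℝ)+2)/(2*(n:ℝ)+3))) := by
      unfold W
      rw [Finset.prod_range_succ]
    have hgoal : W (n+1) * (poch (1/2) (n+1) ^2 * (2*((n:ℝ)+1)+1) / poch 1 (n+1) ^2) = 1 := by
      rw [hW, hq]
      have hone : (((2*(n:ℝ)+2)/(2*(n:ℝ)+1)) * ((2*(n:ℝ)+2)/(2*(n:ℝ)+3)))
          * ((2*(n:ℝ)+1)*(2*(n:ℝ)+3)/((2*(n:ℝ)+2)^2)) = 1 := by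
        field_simp
      calc W n * (((2*(n:ℝ)+2)/(2*(n:ℝ)+1)) * ((2*(n:ℝ)+2)/(2*(n:ℝ)+3)))
            * ((poch (1/2) n^2 * (2*(n:ℝ)+1) / poch 1 n^2)
              * ((2*(n:ℝ)+1)*(2*(n:ℝ)+3)/((2*(n:ℝ)+2)^2)))
          = (W n * (poch (1/2) n^2 * (2*(n:ℝ)+1) / poch 1 n^2))
            * ((((2*(n:ℝ)+2)/(2*(n:ℝ)+1)) * ((2*(n:ℝ)+2)/(2*(n:ℝ)+3)))
              * ((2*(n:ℝ)+1)*(2*(n:ℝ)+3)/((2*(n:ℝ)+2)^2))) := by ring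
        _ = 1 := by rw [ih, hone, one_mul]
    convert hgoal using 3
    push_cast
    ring

lemma G_tendsto :
    Filter.Tendsto (fun n : ℕ => poch (1/2) n ^2 * (2*(n:ℝ)+1) / poch 1 n ^2)
      Filter.atTop (nhds (2/Real.pi)) := by
  have hW := Real.tendsto_prod_pi_div_two
  have hpi : Real.pi / 2 ≠ 0 := by positivity
  have hinv : Filter.Tendsto (fun n : ℕ => (W n)⁻¹) Filter.atTop (nhds ((Real.pi/2)⁻¹)) :=
    (hW : Filter.Tendsto W Filter.atTop (nhds (Real.pi/2))).inv₀ hpi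
  have heq : ∀ n, poch (1/2) n ^2 * (2*(n:ℝ)+1) / poch 1 n ^2 = (W n)⁻¹ := fun n =>
    eq_inv_of_mul_eq_one_left ((mul_comm _ _).trans (W_mul n))
  have : (Real.pi/2)⁻¹ = 2/Real.pi := by
    field_simp
  rw [← this]
  exact hinv.congr (fun n => (heq n).symm)

lemma R_tendsto :
    Filter.Tendsto (fun n : ℕ => (8*(n:ℝ)^2+4*n+1)/((2*(n:ℝ)+1)^2)) Filter.atTop (nhds 2) := by
  have h0 : Filter.Tendsto (fun n : ℕ => (8*(n:ℝ)^2+4*n+1)/((2*(n:ℝ)+1)^2) - 2)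
      Filter.atTop (nhds 0) := by
    have hg : Filter.Tendsto (fun n : ℕ => 2 * (1/((n:ℝ)+1))) Filter.atTop (nhds 0) := by
      simpa using tendsto_one_div_add_atTop_nhds_zero_nat.const_mul (2:ℝ)
    refine squeeze_zero_norm (fun n => ?_) hg
    · have hn : (0:ℝ) ≤ (n:ℕ) := Nat.cast_nonneg n
      have h1 : (0:ℝ) < (2*(n:ℝ)+1)^2 := by positivity
      have heq : (8*(n:ℝ)^2+4*n+1)/((2*(n:ℝ)+1)^2) - 2 = -((4*(n:ℝ)+1)/((2*(n:ℝ)+1)^2)) := by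
        field_simp
        ring
      rw [heq, norm_neg]
      have h2 : (0:ℝ) ≤ (4*(n:ℝ)+1)/((2*(n:ℝ)+1)^2) := by positivity
      rw [Real.norm_eq_abs, abs_of_nonneg h2]
      have h3 : (0:ℝ) < (n:ℝ)+1 := by positivity
      rw [show (2:ℝ)*(1/((n:ℝ)+1)) = 2/((n:ℝ)+1) from by ring, div_le_div_iff₀ h1 h3]
      nlinarith
  have := h0.add_const 2
  simpa using this

lemma FF_zero_eq (n : ℕ) :
    FF n 0 = (poch (1/2) n ^2 * (2*(n:ℝ)+1) / poch 1 n ^2)^2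
      * ((8*(n:ℝ)^2+4*n+1)/((2*(n:ℝ)+1)^2)) := by
  unfold FF Phi
  have he : poch (1:ℝ) n ≠ 0 := poch_ne_zero one_pos n
  have h1 : (2*(n:ℝ)+1) ≠ 0 := by positivity
  rw [show n+0 = n from rfl, poch_zero, poch_zero]
  norm_num
  field_simp

lemma FF_zero_tendsto :
    Filter.Tendsto (fun n : ℕ => FF n 0) Filter.atTop (nhds (8/Real.pi^2)) := by
  have h1 := (G_tendsto.mul G_tendsto).mul R_tendsto
  have heq : 2/Real.pi * (2/Real.pi) * 2 = 8/Real.pi^2 := by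
    rw [div_mul_div_comm]
    ring_nf
  rw [heq] at h1
  refine h1.congr (fun n => ?_)
  rw [FF_zero_eq n]
  ring

noncomputable def tail (n : ℕ) : ℝ := ∑' k, FF n (k+1)

lemma tail_le (n : ℕ) : ‖tail n‖ ≤ 520/((n:ℝ)+1)^4 := by
  have hg : HasSum (fun k : ℕ => (260/((n:ℝ)+1)^4) * (1/2:ℝ)^k) (520/((n:ℝ)+1)^4) := by
    have := (hasSum_geometric_of_lt_one (show (0:ℝ) ≤ 1/2 by norm_num)
      (show (1/2:ℝ) < 1 by norm_num)).mul_left (260/((n:ℝ)+1)^4)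
    norm_num at this
    convert this using 1
    rfl
    ring
  exact tsum_of_norm_bounded hg (fun k => FF_tail_le n k)

lemma tail_tendsto : Filter.Tendsto tail Filter.atTop (nhds 0) := by
  refine squeeze_zero_norm (fun n => tail_le n) ?_
  have hg : Filter.Tendsto (fun n : ℕ => 520 * (1/((n:ℝ)+1))) Filter.atTop (nhds 0) := by
    simpa using tendsto_one_div_add_atTop_nhds_zero_nat.const_mul (520:ℝ)
  refine squeeze_zero_norm (fun n => ?_) hg
  have hn : (0:ℝ) ≤ (n:ℕ) := Nat.cast_nonneg n
  have h1 : (0:ℝ) < ((n:ℝ)+1) := by positivity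
  have h4 : (0:ℝ) < ((n:ℝ)+1)^4 := by positivity
  rw [Real.norm_eq_abs, abs_of_nonneg (by positivity)]
  rw [show (520:ℝ)*(1/((n:ℝ)+1)) = 520/((n:ℝ)+1) from by ring, div_le_div_iff₀ h4 h1]
  nlinarith [pow_pos h1 2, pow_pos h1 3]

lemma S_split (n : ℕ) : S n = FF n 0 + tail n := Summable.tsum_eq_zero_add (FF_summable n)

lemma S_zero : S 0 = 8/Real.pi^2 := by
  have h1 : Filter.Tendsto S Filter.atTop (nhds (8/Real.pi^2 + 0)) :=
    ((FF_zero_tendsto.add tail_tendsto).congr (fun n => (S_split n).symm))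
  have h2 : Filter.Tendsto S Filter.atTop (nhds (S 0)) := by
    refine Filter.Tendsto.congr (fun n => (S_const n).symm) tendsto_const_nhds
  have := tendsto_nhds_unique h2 h1
  simpa using this

lemma S_three : HasSum (FF 3) (8/Real.pi^2) := by
  have := (FF_summable 3).hasSum
  rwa [show (∑' k, FF 3 k) = 8/Real.pi^2 from (S_const 3).trans S_zero] at this

lemma poch_half_three : poch (1/2 : ℝ) 3 = 15/8 := by
  unfold poch
  rw [Finset.prod_range_succ, Finset.prod_range_succ, Finset.prod_range_one]
  norm_num

lemma poch_one_three : poch (1:ℝ) 3 = 6 := by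
  unfold poch
  rw [Finset.prod_range_succ, Finset.prod_range_succ, Finset.prod_range_one]
  norm_num

lemma term_eq (k : ℕ) :
    (-1/4 : ℝ) ^ k * (poch (1/2) k) ^ 5 / (poch 1 k * (poch 4 k) ^ 4) *
      (4 * (k : ℝ) ^ 2 + 16 * k + 17) = (2^16/5^5) * FF 3 k := by
  have hc : poch (1:ℝ) k ≠ 0 := poch_ne_zero one_pos k
  have h4 : poch (4:ℝ) k ≠ 0 := poch_ne_zero (by norm_num) k
  have e1 : poch (1:ℝ) (3+k) = 6 * poch 4 k := by
    rw [poch_add 1 3 k, poch_one_three]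
    norm_num
  unfold FF Phi
  rw [e1, poch_half_three]
  push_cast
  field_simp
  ring

end SeriesB4

theorem series_b4 :
    HasSum
      (fun k : ℕ =>
        (-1/4 : ℝ) ^ k * (poch (1/2) k) ^ 5 / (poch 1 k * (poch 4 k) ^ 4) *
          (4 * (k : ℝ) ^ 2 + 16 * k + 17))
      (2 ^ 19 / (5 ^ 5 * Real.pi ^ 2)) := by
  have h := SeriesB4.S_three.mul_left ((2:ℝ)^16/5^5)
  have hval : (2:ℝ)^16/5^5 * (8/Real.pi^2) = 2 ^ 19 / (5 ^ 5 * Real.pi ^ 2) := by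
    have hpi := Real.pi_ne_zero
    field_simp
    ring
  rw [hval] at h
  have hfe : (fun k : ℕ =>
      (-1/4 : ℝ) ^ k * (poch (1/2) k) ^ 5 / (poch 1 k * (poch 4 k) ^ 4) *
        (4 * (k : ℝ) ^ 2 + 16 * k + 17)) = (fun k : ℕ => (2:ℝ)^16/5^5 * SeriesB4.FF 3 k) :=
    funext (fun k => SeriesB4.term_eq k)
  rw [hfe]
  exact h
end

section
/- The series Σ_{k=0}^∞ (−1/4)^k · ((1/2)_k)^5 / ((1)_k · ((5)_k)^4) · (20k² + 104k + 145) converges and equals 2^31 / (5^4 · 7^4 · π²). -/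
namespace B5
open Finset Filter Real Topology

lemma poch_zero (x : ℝ) : poch x 0 = 1 := by simp [poch]

lemma poch_succ (x : ℝ) (k : ℕ) : poch x (k+1) = poch x k * (x + k) :=
  Finset.prod_range_succ _ _

lemma poch_succ' (x : ℝ) (k : ℕ) : poch x (k+1) = x * poch (x+1) k := by
  unfold poch
  rw [Finset.prod_range_succ']
  have h1 : ∀ i ∈ Finset.range k, (x + ((i:ℕ) + 1 : ℕ)) = (x + 1 + (i:ℝ)) := by
    intro i _; push_cast; ring
  rw [Finset.prod_congr rfl h1]
  push_cast
  ring

lemma poch_pos {x : ℝ} (hx : 0 < x) (k : ℕ) : 0 < poch x k :=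
  Finset.prod_pos fun i _ => by positivity

lemma poch_le_poch {x y : ℝ} (hx : 0 < x) (hxy : x ≤ y) (k : ℕ) :
    poch x k ≤ poch y k := by
  refine Finset.prod_le_prod (fun i _ => by positivity) fun i _ => by linarith

/-- ratio relation: `poch x k * (x+k) = x * poch (x+1) k` -/
lemma poch_ratio (x : ℝ) (k : ℕ) : poch x k * (x + k) = x * poch (x+1) k := by
  rw [← poch_succ, poch_succ']

end B5

namespace B5
open Finset Filter Real Topology

/-- the quadratic weight -/
noncomputable def Pq (m k : ℕ) : ℝ :=
  20*(k:ℝ)^2 + (24*(m:ℝ)+8)*(k:ℝ) + (8*(m:ℝ)^2+4*(m:ℝ)+1)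

/-- certificate polynomial -/
noncomputable def Mc (m k : ℕ) : ℝ :=
  -(16*(k:ℝ)^6 + (96*(m:ℝ)+72)*(k:ℝ)^5 + (224*(m:ℝ)^2+352*(m:ℝ)+128)*(k:ℝ)^4
    + (256*(m:ℝ)^3+624*(m:ℝ)^2+480*(m:ℝ)+112)*(k:ℝ)^3
    + (144*(m:ℝ)^4+480*(m:ℝ)^3+576*(m:ℝ)^2+288*(m:ℝ)+48)*(k:ℝ)^2
    + (32*(m:ℝ)^5+136*(m:ℝ)^4+224*(m:ℝ)^3+176*(m:ℝ)^2+64*(m:ℝ)+8)*(k:ℝ))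

/-- the family of series; `m = 4` is the target -/
noncomputable def f (m k : ℕ) : ℝ :=
  (-1/4 : ℝ) ^ k * (poch (1/2) k) ^ 5 / (poch 1 k * (poch ((m:ℝ)+1) k) ^ 4) * Pq m k

/-- the telescoping certificate sequence -/
noncomputable def g (m k : ℕ) : ℝ :=
  (-1/4 : ℝ) ^ k * (poch (1/2) k) ^ 5 / (poch 1 k * (poch ((m:ℝ)+2) k) ^ 4)
    * (Mc m k / ((m:ℝ)+1)^4)

lemma key (m k : ℕ) :
    f m k - ((2*(m:ℝ)+1)/(2*(m:ℝ)+2))^4 * f (m+1) k = g m (k+1) - g m k := by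
  have hA : (0:ℝ) < poch (1/2) k := poch_pos (by norm_num) k
  have hB : (0:ℝ) < poch 1 k := poch_pos one_pos k
  have hD : (0:ℝ) < poch ((m:ℝ)+2) k := poch_pos (by positivity) k
  have hmk : ((m:ℝ)+1+(k:ℝ)) ≠ 0 := by positivity
  have hrel : poch ((m:ℝ)+1) k = ((m:ℝ)+1) * poch ((m:ℝ)+2) k / ((m:ℝ)+1+(k:ℝ)) := by
    have h := poch_ratio ((m:ℝ)+1) k
    have h2 : ((m:ℝ)+1+1) = ((m:ℝ)+2) := by ring
    rw [h2] at h
    field_simp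
    linarith [h]
  have hcast : ((m+1 : ℕ) : ℝ) = (m:ℝ)+1 := by push_cast; ring
  unfold f g Pq Mc
  rw [hcast, poch_succ (1/2), poch_succ 1, poch_succ ((m:ℝ)+2)]
  have h3 : ((m:ℝ)+1+1) = ((m:ℝ)+2) := by ring
  rw [h3, hrel]
  rw [pow_succ]
  push_cast
  field_simp
  ring
end B5

namespace B5
open Finset Filter Real Topology

lemma Pq_nonneg (m k : ℕ) : 0 ≤ Pq m k := by unfold Pq; positivity

lemma abs_f_eq (m k : ℕ) :
    |f m k| = (1/4:ℝ)^k * ((poch (1/2) k)^5 / (poch 1 k * (poch ((m:ℝ)+1) k)^4)) * Pq m k := by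
  have hA : (0:ℝ) < poch (1/2) k := poch_pos (by norm_num) k
  have hB : (0:ℝ) < poch 1 k := poch_pos one_pos k
  have hD : (0:ℝ) < poch ((m:ℝ)+1) k := poch_pos (by positivity) k
  unfold f
  simp only [abs_mul, abs_div, abs_pow]
  rw [abs_of_nonneg (Pq_nonneg m k), abs_of_nonneg hA.le, abs_of_nonneg hB.le,
    abs_of_nonneg hD.le]
  norm_num [mul_div_assoc]

lemma frac_le_one (m k : ℕ) :
    (poch (1/2) k)^5 / (poch 1 k * (poch ((m:ℝ)+1) k)^4) ≤ 1 := by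
  have hA : (0:ℝ) < poch (1/2) k := poch_pos (by norm_num) k
  have hB : (0:ℝ) < poch 1 k := poch_pos one_pos k
  have hD : (0:ℝ) < poch ((m:ℝ)+1) k := poch_pos (by positivity) k
  have hAB : poch (1/2) k ≤ poch 1 k := poch_le_poch (by norm_num) (by norm_num) k
  have hBD : poch 1 k ≤ poch ((m:ℝ)+1) k := poch_le_poch one_pos (by simp) k
  rw [div_le_one (by positivity)]
  calc (poch (1/2) k)^5 ≤ (poch 1 k)^5 := pow_le_pow_left₀ hA.le hAB 5
    _ = poch 1 k * (poch 1 k)^4 := by ring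
    _ ≤ poch 1 k * (poch ((m:ℝ)+1) k)^4 :=
        mul_le_mul_of_nonneg_left (pow_le_pow_left₀ hB.le hBD 4) hB.le

lemma f_abs_le (m k : ℕ) : |f m k| ≤ Pq m k * (1/4)^k := by
  rw [abs_f_eq]
  calc (1/4:ℝ)^k * ((poch (1/2) k)^5 / (poch 1 k * (poch ((m:ℝ)+1) k)^4)) * Pq m k
      ≤ (1/4:ℝ)^k * 1 * Pq m k := by
        exact mul_le_mul_of_nonneg_right
          (mul_le_mul_of_nonneg_left (frac_le_one m k) (by positivity)) (Pq_nonneg m k)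
    _ = Pq m k * (1/4)^k := by ring

lemma summable_aux (j : ℕ) : Summable (fun k : ℕ => (k:ℝ)^j * (1/4)^k) := by
  have h : ‖(1/4 : ℝ)‖ < 1 := by
    rw [Real.norm_eq_abs, abs_of_nonneg (by norm_num : (0:ℝ) ≤ 1/4)]; norm_num
  exact summable_pow_mul_geometric_of_norm_lt_one j h

lemma summable_Pq (m : ℕ) : Summable (fun k => Pq m k * (1/4:ℝ)^k) := by
  have h2 := (summable_aux 2).mul_left 20
  have h1 := (summable_aux 1).mul_left (24*(m:ℝ)+8)
  have h0 := (summable_aux 0).mul_left (8*(m:ℝ)^2+4*(m:ℝ)+1)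
  refine ((h2.add h1).add h0).congr fun k => ?_
  unfold Pq; ring

lemma summable_f (m : ℕ) : Summable (f m) := by
  apply Summable.of_norm_bounded (summable_Pq m)
  intro k
  rw [Real.norm_eq_abs]
  exact f_abs_le m k

lemma Mc_abs_le (m k : ℕ) :
    |Mc m k| ≤ 2000*((m:ℝ)+1)^5 *
      ((k:ℝ)^6 + (k:ℝ)^5 + (k:ℝ)^4 + (k:ℝ)^3 + (k:ℝ)^2 + (k:ℝ)) := by
  have hm : (0:ℝ) ≤ (m:ℝ) := Nat.cast_nonneg m
  have hk : (0:ℝ) ≤ (k:ℝ) := Nat.cast_nonneg k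
  have hc : ∀ j : ℕ, (0:ℝ) ≤ (m:ℝ)^j := fun j => pow_nonneg hm j
  have h6 : (0:ℝ) ≤ 2000*((m:ℝ)+1)^5 - 16 := by nlinarith [hc 2, hc 3, hc 4, hc 5]
  have h5 : (0:ℝ) ≤ 2000*((m:ℝ)+1)^5 - (96*(m:ℝ)+72) := by nlinarith [hc 2, hc 3, hc 4, hc 5]
  have h4 : (0:ℝ) ≤ 2000*((m:ℝ)+1)^5 - (224*(m:ℝ)^2+352*(m:ℝ)+128) := by
    nlinarith [hc 2, hc 3, hc 4, hc 5]
  have h3 : (0:ℝ) ≤ 2000*((m:ℝ)+1)^5 - (256*(m:ℝ)^3+624*(m:ℝ)^2+480*(m:ℝ)+112) := by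
    nlinarith [hc 2, hc 3, hc 4, hc 5]
  have h2 : (0:ℝ) ≤ 2000*((m:ℝ)+1)^5 - (144*(m:ℝ)^4+480*(m:ℝ)^3+576*(m:ℝ)^2+288*(m:ℝ)+48) := by
    nlinarith [hc 2, hc 3, hc 4, hc 5]
  have h1 : (0:ℝ) ≤ 2000*((m:ℝ)+1)^5
      - (32*(m:ℝ)^5+136*(m:ℝ)^4+224*(m:ℝ)^3+176*(m:ℝ)^2+64*(m:ℝ)+8) := by
    nlinarith [hc 2, hc 3, hc 4, hc 5]
  unfold Mc
  rw [abs_neg, abs_of_nonneg (by positivity)]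
  nlinarith [mul_nonneg h6 (pow_nonneg hk 6), mul_nonneg h5 (pow_nonneg hk 5),
    mul_nonneg h4 (pow_nonneg hk 4), mul_nonneg h3 (pow_nonneg hk 3),
    mul_nonneg h2 (pow_nonneg hk 2), mul_nonneg h1 hk]

lemma g_abs_le (m k : ℕ) :
    |g m k| ≤ 2000*((m:ℝ)+1)^5 *
      (((k:ℝ)^6 + (k:ℝ)^5 + (k:ℝ)^4 + (k:ℝ)^3 + (k:ℝ)^2 + (k:ℝ)) * (1/4)^k) := by
  have hA : (0:ℝ) < poch (1/2) k := poch_pos (by norm_num) k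
  have hB : (0:ℝ) < poch 1 k := poch_pos one_pos k
  have hD : (0:ℝ) < poch ((m:ℝ)+2) k := poch_pos (by positivity) k
  have hAB : poch (1/2) k ≤ poch 1 k := poch_le_poch (by norm_num) (by norm_num) k
  have hBD : poch 1 k ≤ poch ((m:ℝ)+2) k := poch_le_poch one_pos
    (by have := Nat.cast_nonneg (α := ℝ) m; linarith) k
  have hfrac : (poch (1/2) k)^5 / (poch 1 k * (poch ((m:ℝ)+2) k)^4) ≤ 1 := by
    rw [div_le_one (by positivity)]
    calc (poch (1/2) k)^5 ≤ (poch 1 k)^5 := pow_le_pow_left₀ hA.le hAB 5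
      _ = poch 1 k * (poch 1 k)^4 := by ring
      _ ≤ poch 1 k * (poch ((m:ℝ)+2) k)^4 :=
          mul_le_mul_of_nonneg_left (pow_le_pow_left₀ hB.le hBD 4) hB.le
  have hm1 : (1:ℝ) ≤ ((m:ℝ)+1)^4 := by
    have h0 := Nat.cast_nonneg (α := ℝ) m
    calc (1:ℝ) = 1^4 := by norm_num
      _ ≤ ((m:ℝ)+1)^4 := pow_le_pow_left₀ (by norm_num) (by linarith) 4
  have heq : |g m k| = (1/4:ℝ)^k
      * ((poch (1/2) k)^5 / (poch 1 k * (poch ((m:ℝ)+2) k)^4)) * (|Mc m k| / ((m:ℝ)+1)^4) := by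
    unfold g
    simp only [abs_mul, abs_div, abs_pow]
    rw [abs_of_nonneg hA.le, abs_of_nonneg hB.le, abs_of_nonneg hD.le,
      abs_of_nonneg (show (0:ℝ) ≤ (m:ℝ)+1 by positivity)]
    norm_num [mul_div_assoc]
  rw [heq]
  have step1 : (1/4:ℝ)^k * ((poch (1/2) k)^5 / (poch 1 k * (poch ((m:ℝ)+2) k)^4))
      * (|Mc m k| / ((m:ℝ)+1)^4) ≤ (1/4:ℝ)^k * 1 * |Mc m k| := by
    apply mul_le_mul
    · exact mul_le_mul_of_nonneg_left hfrac (by positivity)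
    · calc |Mc m k| / ((m:ℝ)+1)^4 ≤ |Mc m k| / 1 :=
            div_le_div_of_nonneg_left (abs_nonneg _) one_pos hm1
        _ = |Mc m k| := by ring
    · positivity
    · positivity
  calc (1/4:ℝ)^k * ((poch (1/2) k)^5 / (poch 1 k * (poch ((m:ℝ)+2) k)^4))
        * (|Mc m k| / ((m:ℝ)+1)^4)
      ≤ (1/4:ℝ)^k * 1 * |Mc m k| := step1
    _ = |Mc m k| * (1/4:ℝ)^k := by ring
    _ ≤ (2000*((m:ℝ)+1)^5 * ((k:ℝ)^6 + (k:ℝ)^5 + (k:ℝ)^4 + (k:ℝ)^3 + (k:ℝ)^2 + (k:ℝ)))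
        * (1/4:ℝ)^k := mul_le_mul_of_nonneg_right (Mc_abs_le m k) (by positivity)
    _ = 2000*((m:ℝ)+1)^5 *
        (((k:ℝ)^6 + (k:ℝ)^5 + (k:ℝ)^4 + (k:ℝ)^3 + (k:ℝ)^2 + (k:ℝ)) * (1/4)^k) := by ring

lemma summable_g (m : ℕ) : Summable (g m) := by
  have hs : Summable (fun k : ℕ => 2000*((m:ℝ)+1)^5 *
      (((k:ℝ)^6 + (k:ℝ)^5 + (k:ℝ)^4 + (k:ℝ)^3 + (k:ℝ)^2 + (k:ℝ)) * (1/4)^k)) := by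
    apply Summable.mul_left
    have h := ((((((summable_aux 6).add (summable_aux 5)).add (summable_aux 4)).add
      (summable_aux 3)).add (summable_aux 2)).add (summable_aux 1))
    refine h.congr fun k => ?_
    ring
  apply Summable.of_norm_bounded hs
  intro k
  rw [Real.norm_eq_abs]
  exact g_abs_le m k

lemma g_tendsto_zero (m : ℕ) : Tendsto (g m) atTop (𝓝 0) :=
  (summable_g m).tendsto_atTop_zero

lemma g_zero (m : ℕ) : g m 0 = 0 := by
  unfold g Mc
  simp [poch_zero]

end B5

namespace B5
open Finset Filter Real Topology

lemma step (m : ℕ) :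
    ∑' k, f m k = ((2*(m:ℝ)+1)/(2*(m:ℝ)+2))^4 * ∑' k, f (m+1) k := by
  set c : ℝ := ((2*(m:ℝ)+1)/(2*(m:ℝ)+2))^4 with hc
  have hs1 := summable_f m
  have hs2 := summable_f (m+1)
  have hhs : HasSum (fun k => f m k - c * f (m+1) k)
      ((∑' k, f m k) - c * ∑' k, f (m+1) k) := by
    exact hs1.hasSum.sub ((hs2.hasSum).mul_left c)
  have h2 : Tendsto (fun n => ∑ k ∈ range n, (f m k - c * f (m+1) k)) atTop (𝓝 0) := by
    have heq : (fun n => ∑ k ∈ range n, (f m k - c * f (m+1) k))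
        = fun n => g m n - g m 0 := by
      funext n
      rw [← Finset.sum_range_sub (g m)]
      exact Finset.sum_congr rfl fun k _ => (key m k)
    rw [heq, g_zero]
    simpa using g_tendsto_zero m
  have h3 : (∑' k, f m k) - c * (∑' k, f (m+1) k) = 0 :=
    tendsto_nhds_unique hhs.tendsto_sum_nat h2
  linarith

/-- normalizing products -/
noncomputable def Q (m : ℕ) : ℝ := ∏ j ∈ range m, ((2*(j:ℝ)+1)/(2*(j:ℝ)+2))

lemma Q_succ (m : ℕ) : Q (m+1) = Q m * ((2*(m:ℝ)+1)/(2*(m:ℝ)+2)) :=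
  Finset.prod_range_succ _ _

lemma Q_pos (m : ℕ) : 0 < Q m := Finset.prod_pos fun j _ => by positivity

lemma Q_le_one (m : ℕ) : Q m ≤ 1 := by
  induction m with
  | zero => simp [Q]
  | succ n ih =>
    rw [Q_succ]
    have h1 : (2*(n:ℝ)+1)/(2*(n:ℝ)+2) ≤ 1 := by
      rw [div_le_one (by positivity)]; linarith
    calc Q n * ((2*(n:ℝ)+1)/(2*(n:ℝ)+2)) ≤ 1 * 1 :=
          mul_le_mul ih h1 (by positivity) one_pos.le
      _ = 1 := by ring

lemma E_const (m : ℕ) : Q m ^ 4 * ∑' k, f m k = ∑' k, f 0 k := by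
  induction m with
  | zero => simp [Q]
  | succ n ih =>
    rw [← ih, Q_succ, step n]
    ring

end B5

namespace B5
open Finset Filter Real Topology

lemma f_zero (m : ℕ) : f m 0 = 8*(m:ℝ)^2+4*(m:ℝ)+1 := by
  unfold f Pq
  simp [poch_zero]

lemma f_succ_abs_le (m k : ℕ) :
    |f m (k+1)| ≤ Pq m (k+1) * (1/4)^(k+1) / ((m:ℝ)+1)^4 := by
  have hA : (0:ℝ) < poch (1/2) (k+1) := poch_pos (by norm_num) _
  have hB : (0:ℝ) < poch 1 (k+1) := poch_pos one_pos _
  have hD : (0:ℝ) < poch ((m:ℝ)+1) (k+1) := poch_pos (by positivity) _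
  have hm0 : (0:ℝ) < (m:ℝ)+1 := by positivity
  have hAB : poch (1/2) (k+1) ≤ poch 1 (k+1) := poch_le_poch (by norm_num) (by norm_num) _
  have h2 : (0:ℝ) < poch 2 k := poch_pos (by norm_num) k
  have hBB : poch 1 (k+1) = poch 2 k := by
    rw [poch_succ' 1 k]; norm_num
  have hDD : poch ((m:ℝ)+1) (k+1) = ((m:ℝ)+1) * poch ((m:ℝ)+2) k := by
    rw [poch_succ' ((m:ℝ)+1) k]
    congr 1
    ring
  have h2m : poch 2 k ≤ poch ((m:ℝ)+2) k := poch_le_poch (by norm_num)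
    (by have := Nat.cast_nonneg (α := ℝ) m; linarith) k
  have hfrac : (poch (1/2) (k+1))^5 / (poch 1 (k+1) * (poch ((m:ℝ)+1) (k+1))^4)
      ≤ 1 / ((m:ℝ)+1)^4 := by
    rw [div_le_div_iff₀ (by positivity) (by positivity)]
    calc (poch (1/2) (k+1))^5 * ((m:ℝ)+1)^4
        ≤ (poch 1 (k+1))^5 * ((m:ℝ)+1)^4 := by
          exact mul_le_mul_of_nonneg_right (pow_le_pow_left₀ hA.le hAB 5) (by positivity)
      _ = poch 1 (k+1) * (((m:ℝ)+1) * poch 2 k)^4 := by rw [hBB]; ring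
      _ ≤ poch 1 (k+1) * (((m:ℝ)+1) * poch ((m:ℝ)+2) k)^4 := by
          refine mul_le_mul_of_nonneg_left (pow_le_pow_left₀ (by positivity) ?_ 4) hB.le
          exact mul_le_mul_of_nonneg_left h2m hm0.le
      _ = 1 * (poch 1 (k+1) * (poch ((m:ℝ)+1) (k+1))^4) := by rw [hDD]; ring
  rw [abs_f_eq]
  calc (1/4:ℝ)^(k+1) * ((poch (1/2) (k+1))^5 / (poch 1 (k+1) * (poch ((m:ℝ)+1) (k+1))^4))
        * Pq m (k+1)
      ≤ (1/4:ℝ)^(k+1) * (1/((m:ℝ)+1)^4) * Pq m (k+1) := by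
        exact mul_le_mul_of_nonneg_right
          (mul_le_mul_of_nonneg_left hfrac (by positivity)) (Pq_nonneg _ _)
    _ = Pq m (k+1) * (1/4)^(k+1) / ((m:ℝ)+1)^4 := by ring

lemma Pq_succ_le (m k : ℕ) :
    Pq m (k+1) ≤ 87 * ((m:ℝ)+1)^2 * ((k:ℝ)+1)^2 := by
  unfold Pq
  have hm : (0:ℝ) ≤ (m:ℝ) := Nat.cast_nonneg m
  have hk : (0:ℝ) ≤ (k:ℝ) := Nat.cast_nonneg k
  push_cast
  nlinarith [mul_nonneg hm hk, mul_nonneg (mul_nonneg hm hm) hk,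
    mul_nonneg (mul_nonneg hm hm) (mul_nonneg hk hk), mul_nonneg hm (mul_nonneg hk hk),
    mul_nonneg hm hm, mul_nonneg hk hk]

/-- the fixed tail constant -/
noncomputable def T0 : ℝ := ∑' k : ℕ, ((k:ℝ)+1)^2 * (1/4)^(k+1)

lemma summable_T0 : Summable (fun k : ℕ => ((k:ℝ)+1)^2 * (1/4:ℝ)^(k+1)) := by
  have := (summable_nat_add_iff (f := fun k : ℕ => (k:ℝ)^2 * (1/4:ℝ)^k) 1).mpr (summable_aux 2)
  refine this.congr fun k => ?_
  push_cast
  ring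

lemma T0_nonneg : 0 ≤ T0 := tsum_nonneg fun k => by positivity

lemma tail_bound (m : ℕ) :
    |∑' k, f m (k+1)| ≤ 87 * T0 / ((m:ℝ)+1)^2 := by
  have hsum : Summable (fun k => f m (k+1)) :=
    (summable_nat_add_iff 1).mpr (summable_f m)
  have hbnd : Summable (fun k : ℕ => 87 * ((k:ℝ)+1)^2 * (1/4:ℝ)^(k+1) / ((m:ℝ)+1)^2) := by
    apply Summable.div_const
    exact (summable_T0.mul_left 87).congr fun k => by ring
  have hle : ∀ k : ℕ, |f m (k+1)| ≤ 87 * ((k:ℝ)+1)^2 * (1/4:ℝ)^(k+1) / ((m:ℝ)+1)^2 := by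
    intro k
    have h1 := f_succ_abs_le m k
    have h2 : Pq m (k+1) * (1/4:ℝ)^(k+1) / ((m:ℝ)+1)^4
        ≤ 87 * ((m:ℝ)+1)^2 * ((k:ℝ)+1)^2 * (1/4:ℝ)^(k+1) / ((m:ℝ)+1)^4 := by
      apply div_le_div_of_nonneg_right _ (by positivity)
      exact mul_le_mul_of_nonneg_right (Pq_succ_le m k) (by positivity)
    have h3 : 87 * ((m:ℝ)+1)^2 * ((k:ℝ)+1)^2 * (1/4:ℝ)^(k+1) / ((m:ℝ)+1)^4
        = 87 * ((k:ℝ)+1)^2 * (1/4:ℝ)^(k+1) / ((m:ℝ)+1)^2 := by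
      field_simp
    linarith
  have habs : Summable (fun k : ℕ => |f m (k+1)|) := by
    simpa [Real.norm_eq_abs] using hsum.norm
  calc |∑' k, f m (k+1)| ≤ ∑' k, |f m (k+1)| := by
        have := norm_tsum_le_tsum_norm (f := fun k : ℕ => f m (k+1))
          (by simpa [Real.norm_eq_abs] using habs)
        simpa [Real.norm_eq_abs] using this
    _ ≤ ∑' k : ℕ, 87 * ((k:ℝ)+1)^2 * (1/4:ℝ)^(k+1) / ((m:ℝ)+1)^2 :=
        habs.tsum_le_tsum hle hbnd
    _ = 87 * T0 / ((m:ℝ)+1)^2 := by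
        rw [T0, ← tsum_mul_left, ← tsum_div_const]
        exact tsum_congr fun k => by ring

end B5

namespace B5
open Finset Filter Real Topology

lemma QW (m : ℕ) : Q m ^ 2 * ((2*(m:ℝ)+1) * Real.Wallis.W m) = 1 := by
  induction m with
  | zero => simp [Q, Real.Wallis.W]
  | succ n ih =>
    rw [Q_succ, Real.Wallis.W_succ]
    have h1 : (2*(n:ℝ)+1) ≠ 0 := by positivity
    have h2 : (2*(n:ℝ)+2) ≠ 0 := by positivity
    have h3 : (2*(n:ℝ)+3) ≠ 0 := by positivity
    have hcast : ((n+1 : ℕ) : ℝ) = (n:ℝ)+1 := by push_cast; ring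
    rw [hcast]
    have hkey : (Q n * ((2*(n:ℝ)+1)/(2*(n:ℝ)+2))) ^ 2
        * ((2*((n:ℝ)+1)+1) * (Real.Wallis.W n * ((2*(n:ℝ)+2)/(2*(n:ℝ)+1) * ((2*(n:ℝ)+2)/(2*(n:ℝ)+3)))))
        = Q n ^ 2 * ((2*(n:ℝ)+1) * Real.Wallis.W n) := by
      field_simp
      ring
    rw [hkey, ih]

lemma Q4_pow (m : ℕ) :
    Q m ^ 4 * (8*(m:ℝ)^2+4*(m:ℝ)+1)
      = ((8*(m:ℝ)^2+4*(m:ℝ)+1) / (2*(m:ℝ)+1)^2) / (Real.Wallis.W m)^2 := by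
  have hW := Real.Wallis.W_pos m
  have h1 : (2*(m:ℝ)+1) ≠ 0 := by positivity
  have hne2 : ((2*(m:ℝ)+1) * Real.Wallis.W m) ≠ 0 := by positivity
  have hQ2 : Q m ^ 2 = 1 / ((2*(m:ℝ)+1) * Real.Wallis.W m) := by
    rw [eq_div_iff hne2]
    exact QW m
  have h4 : Q m ^ 4 = (Q m ^ 2)^2 := by ring
  have hWne : Real.Wallis.W m ≠ 0 := hW.ne'
  rw [h4, hQ2]
  rw [div_pow, one_pow, mul_pow, div_mul_eq_mul_div, one_mul, div_div]

lemma tendsto_ratio :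
    Tendsto (fun m : ℕ => (8*(m:ℝ)^2+4*(m:ℝ)+1) / (2*(m:ℝ)+1)^2) atTop (𝓝 2) := by
  have hsmall : Tendsto (fun m : ℕ => (4*(m:ℝ)+1) / (2*(m:ℝ)+1)^2) atTop (𝓝 0) := by
    have hub : ∀ m : ℕ, (4*(m:ℝ)+1) / (2*(m:ℝ)+1)^2 ≤ 2 * (1/((m:ℝ)+1)) := by
      intro m
      have hm : (0:ℝ) ≤ (m:ℝ) := Nat.cast_nonneg m
      rw [div_le_iff₀ (by positivity)]
      have : 2 * (1/((m:ℝ)+1)) = 2/((m:ℝ)+1) := by ring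
      rw [this, div_mul_eq_mul_div, le_div_iff₀ (by positivity)]
      nlinarith
    have hlb : ∀ m : ℕ, 0 ≤ (4*(m:ℝ)+1) / (2*(m:ℝ)+1)^2 := by
      intro m
      have hm : (0:ℝ) ≤ (m:ℝ) := Nat.cast_nonneg m
      positivity
    have hz : Tendsto (fun m : ℕ => 2 * (1/((m:ℝ)+1))) atTop (𝓝 0) := by
      have := tendsto_one_div_add_atTop_nhds_zero_nat (𝕜 := ℝ)
      have h2 := this.const_mul (2:ℝ)
      simpa using h2
    exact tendsto_of_tendsto_of_tendsto_of_le_of_le tendsto_const_nhds hz hlb hub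
  have heq : ∀ m : ℕ, (8*(m:ℝ)^2+4*(m:ℝ)+1) / (2*(m:ℝ)+1)^2
      = 2 - (4*(m:ℝ)+1) / (2*(m:ℝ)+1)^2 := by
    intro m
    have hm : (0:ℝ) ≤ (m:ℝ) := Nat.cast_nonneg m
    field_simp
    ring
  have hconst2 : Tendsto (fun _ : ℕ => (2:ℝ)) atTop (𝓝 2) := tendsto_const_nhds
  have := hconst2.sub hsmall
  rw [sub_zero] at this
  exact this.congr fun m => (heq m).symm

lemma tendsto_main :
    Tendsto (fun m : ℕ => Q m ^ 4 * (8*(m:ℝ)^2+4*(m:ℝ)+1)) atTop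
      (𝓝 (8 / Real.pi^2)) := by
  have hW := Real.Wallis.tendsto_W_nhds_pi_div_two
  have hW2 : Tendsto (fun m : ℕ => (Real.Wallis.W m)^2) atTop (𝓝 ((Real.pi/2)^2)) := hW.pow 2
  have hne : ((Real.pi/2)^2 : ℝ) ≠ 0 := by positivity
  have hdiv := tendsto_ratio.div hW2 hne
  have hval : (2 : ℝ) / (Real.pi/2)^2 = 8 / Real.pi^2 := by
    field_simp
    ring
  rw [hval] at hdiv
  exact hdiv.congr fun m => (Q4_pow m).symm

lemma tsum_f0 : ∑' k, f 0 k = 8 / Real.pi^2 := by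
  have hE : ∀ m : ℕ, Q m ^ 4 * ∑' k, f m k = ∑' k, f 0 k := E_const
  have hsplit : ∀ m : ℕ, Q m ^ 4 * ∑' k, f m k
      = Q m ^ 4 * (8*(m:ℝ)^2+4*(m:ℝ)+1) + Q m ^ 4 * ∑' k, f m (k+1) := by
    intro m
    rw [Summable.tsum_eq_zero_add (summable_f m), f_zero]
    ring
  have htail : Tendsto (fun m : ℕ => Q m ^ 4 * ∑' k, f m (k+1)) atTop (𝓝 0) := by
    have hub : ∀ m : ℕ, |Q m ^ 4 * ∑' k, f m (k+1)| ≤ 87 * T0 / ((m:ℝ)+1)^2 := by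
      intro m
      rw [abs_mul]
      have hQ : |Q m ^ 4| ≤ 1 := by
        rw [abs_of_nonneg (by positivity)]
        calc Q m ^ 4 ≤ 1^4 := pow_le_pow_left₀ (Q_pos m).le (Q_le_one m) 4
          _ = 1 := by norm_num
      calc |Q m ^ 4| * |∑' k, f m (k+1)| ≤ 1 * (87 * T0 / ((m:ℝ)+1)^2) :=
            mul_le_mul hQ (tail_bound m) (abs_nonneg _) one_pos.le
        _ = 87 * T0 / ((m:ℝ)+1)^2 := by ring
    have hz : Tendsto (fun m : ℕ => 87 * T0 / ((m:ℝ)+1)^2) atTop (𝓝 0) := by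
      have h0 : Tendsto (fun m : ℕ => ((m:ℝ)+1)) atTop atTop :=
        tendsto_atTop_add_const_right atTop 1 tendsto_natCast_atTop_atTop
      have h1 : Tendsto (fun m : ℕ => ((m:ℝ)+1)^2) atTop atTop :=
        (tendsto_pow_atTop (by norm_num)).comp h0
      exact Tendsto.div_atTop tendsto_const_nhds h1
    have h0 : Tendsto (fun m : ℕ => |Q m ^ 4 * ∑' k, f m (k+1)|) atTop (𝓝 0) := by
      refine tendsto_of_tendsto_of_tendsto_of_le_of_le tendsto_const_nhds hz
        (fun m => abs_nonneg _) hub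
    exact (tendsto_zero_iff_abs_tendsto_zero _).mpr h0
  have hsum : Tendsto (fun m : ℕ => Q m ^ 4 * ∑' k, f m k) atTop (𝓝 (8/Real.pi^2)) := by
    have := tendsto_main.add htail
    rw [add_zero] at this
    exact this.congr fun m => (hsplit m).symm
  have hconst : Tendsto (fun _ : ℕ => ∑' k, f 0 k) atTop (𝓝 (∑' k, f 0 k)) :=
    tendsto_const_nhds
  have : (fun m : ℕ => Q m ^ 4 * ∑' k, f m k) = fun _ : ℕ => ∑' k, f 0 k := funext hE
  rw [this] at hsum
  exact tendsto_nhds_unique hconst hsum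

lemma Q4_val : Q 4 = 35/128 := by
  unfold Q
  rw [Finset.prod_range_succ, Finset.prod_range_succ, Finset.prod_range_succ,
    Finset.prod_range_succ, Finset.prod_range_zero]
  norm_num

lemma tsum_f4 : ∑' k, f 4 k = 2^31 / (5^4 * 7^4 * Real.pi^2) := by
  have h := E_const 4
  rw [tsum_f0, Q4_val] at h
  have hpi : Real.pi ≠ 0 := Real.pi_ne_zero
  have h35 : ((35:ℝ)/128)^4 ≠ 0 := by norm_num
  field_simp at h ⊢
  nlinarith [h, sq_nonneg Real.pi]

end B5

theorem series_b5 :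
    HasSum
      (fun k : ℕ =>
        (-1/4 : ℝ) ^ k * (poch (1/2) k) ^ 5 / (poch 1 k * (poch 5 k) ^ 4) *
          (20 * (k : ℝ) ^ 2 + 104 * k + 145))
      (2 ^ 31 / (5 ^ 4 * 7 ^ 4 * Real.pi ^ 2)) := by
  have hs := B5.summable_f 4
  have hfun : B5.f 4 = (fun k : ℕ =>
      (-1/4 : ℝ) ^ k * (poch (1/2) k) ^ 5 / (poch 1 k * (poch 5 k) ^ 4) *
        (20 * (k : ℝ) ^ 2 + 104 * k + 145)) := by
    funext k
    unfold B5.f B5.Pq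
    norm_num
  have h := hs.hasSum
  rw [B5.tsum_f4, hfun] at h
  exact h
end
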